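/- (Two-dimensional collapse of a local spatial coupling) Let L, R ∈ ℕ^D with 1 ≤ R_k ≤ L_k − 1 for all k, let f : ℤ^D → ℝ have locality R, and partition {1,…,D} into disjoint sets 𝒟₁ ∪ 𝒟₂. Let L̃_γ = ∏_{k ∈ 𝒟_γ} (L_k + R_k) for γ = 1, 2. Then there exist f' : ℤ² → ℝ periodic with period (L̃₁, L̃₂) in each coordinate, and a map h' : ∏_k [0, L_k) ∩ ℤ^D → [0, L̃₁) × [0, L̃₂) ∩ ℤ², such that f'(h'(d_i) − h'(d_j)) = f(d_i − d_j) for all d_i, d_j in the box ∏_k [0, L_k). -/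

import Mathlib

namespace Stmt6Aux

variable {α : Type*}

/-- mixed-radix encoding along a list of indices -/
def encL (b x : α → ℤ) : List α → ℤ
  | [] => 0
  | k :: t => x k + b k * encL b x t

lemma encL_sub (b x y : α → ℤ) (l : List α) :
    encL b x l - encL b y l = encL b (fun k => x k - y k) l := by
  induction l with
  | nil => simp [encL]
  | cons k t ih => simp only [encL]; rw [← ih]; ring

lemma encL_zero_fn (b x : α → ℤ) (l : List α) (hx : ∀ k ∈ l, x k = 0) :
    encL b x l = 0 := by
  induction l with
  | nil => simp [encL]
  | cons k t ih =>
      simp only [encL, hx k (List.mem_cons_self),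
        ih (fun k' hk' => hx k' (List.mem_cons_of_mem _ hk'))]
      ring

lemma prod_map_one_le (b : α → ℤ) (l : List α) (hb : ∀ k ∈ l, 1 ≤ b k) :
    1 ≤ (l.map b).prod := by
  induction l with
  | nil => simp
  | cons k t ih =>
      simp only [List.map_cons, List.prod_cons]
      have h1 := hb k (List.mem_cons_self)
      have h2 := ih (fun k' hk' => hb k' (List.mem_cons_of_mem _ hk'))
      nlinarith

lemma encL_abs_le (b x : α → ℤ) (l : List α)
    (hb : ∀ k ∈ l, 1 ≤ b k) (hx : ∀ k ∈ l, |x k| ≤ b k - 1) :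
    |encL b x l| ≤ (l.map b).prod - 1 := by
  induction l with
  | nil => simp [encL]
  | cons k t ih =>
      simp only [encL, List.map_cons, List.prod_cons]
      have h1 := hb k (List.mem_cons_self)
      have h2 := ih (fun k' hk' => hb k' (List.mem_cons_of_mem _ hk'))
        (fun k' hk' => hx k' (List.mem_cons_of_mem _ hk'))
      have h3 := hx k (List.mem_cons_self)
      have h4 : |x k + b k * encL b x t| ≤ |x k| + b k * |encL b x t| := by
        calc |x k + b k * encL b x t| ≤ |x k| + |b k * encL b x t| := abs_add_le _ _
        _ = |x k| + b k * |encL b x t| := by rw [abs_mul, abs_of_pos (by linarith : (0:ℤ) < b k)]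
      have h5 := prod_map_one_le b t (fun k' hk' => hb k' (List.mem_cons_of_mem _ hk'))
      nlinarith [abs_nonneg (encL b x t)]

lemma encL_nonneg (b x : α → ℤ) (l : List α)
    (hb : ∀ k ∈ l, 1 ≤ b k) (hx : ∀ k ∈ l, 0 ≤ x k) :
    0 ≤ encL b x l := by
  induction l with
  | nil => simp [encL]
  | cons k t ih =>
      simp only [encL]
      have h1 := hb k (List.mem_cons_self)
      have h2 := ih (fun k' hk' => hb k' (List.mem_cons_of_mem _ hk'))
        (fun k' hk' => hx k' (List.mem_cons_of_mem _ hk'))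
      have h3 := hx k (List.mem_cons_self)
      nlinarith

lemma encL_eq_zero (b x : α → ℤ) (l : List α)
    (hb : ∀ k ∈ l, 1 ≤ b k) (hx : ∀ k ∈ l, |x k| ≤ b k - 1)
    (hd : (l.map b).prod ∣ encL b x l) : ∀ k ∈ l, x k = 0 := by
  induction l with
  | nil => simp
  | cons k t ih =>
      intro k' hk'
      simp only [encL, List.map_cons, List.prod_cons] at hd
      have hbk := hb k (List.mem_cons_self)
      have hxk := hx k (List.mem_cons_self)
      have hb' : ∀ k'' ∈ t, 1 ≤ b k'' := fun k'' h => hb k'' (List.mem_cons_of_mem _ h)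
      have hx' : ∀ k'' ∈ t, |x k''| ≤ b k'' - 1 := fun k'' h => hx k'' (List.mem_cons_of_mem _ h)
      have hdvd1 : b k ∣ x k + b k * encL b x t :=
        dvd_trans (Dvd.intro _ rfl) hd
      have hdvd2 : b k ∣ x k := by
        have h := dvd_sub hdvd1 (Dvd.intro _ rfl : b k ∣ b k * encL b x t)
        simpa using h
      have hxk0 : x k = 0 := Int.eq_zero_of_abs_lt_dvd hdvd2 (by linarith)
      have hd2 : (t.map b).prod ∣ encL b x t := by
        have h0 : b k * (t.map b).prod ∣ b k * encL b x t := by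
          have : x k + b k * encL b x t = b k * encL b x t := by rw [hxk0]; ring
          rwa [this] at hd
        exact (mul_dvd_mul_iff_left (by omega : b k ≠ 0)).mp h0
      rcases List.mem_cons.mp hk' with h | h
      · rw [h]; exact hxk0
      · exact ih hb' hx' hd2 k' h

end Stmt6Aux

/-- two-dimensional collapse of a local spatial coupling, for a
partition {1,…,D} = 𝒟₁ ∪ 𝒟₂. -/
theorem stmt_6 (D : ℕ) (L R : Fin D → ℕ)
    (hR : ∀ k, 1 ≤ R k) (hRL : ∀ k, R k + 1 ≤ L k)
    (f : (Fin D → ℤ) → ℝ)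
    (hloc : ∀ r : Fin D → ℤ, (∃ k, (R k : ℤ) < |r k|) → f r = 0)
    (D1 D2 : Finset (Fin D)) (hdisj : Disjoint D1 D2) (hunion : D1 ∪ D2 = Finset.univ) :
    ∃ (f' : ℤ × ℤ → ℝ) (h' : (Fin D → ℤ) → ℤ × ℤ),
      (∀ (r : ℤ × ℤ) (m n : ℤ),
        f' (r.1 + m * (∏ k ∈ D1, (L k + R k) : ℕ), r.2 + n * (∏ k ∈ D2, (L k + R k) : ℕ)) = f' r) ∧
      (∀ d : Fin D → ℤ, (∀ k, 0 ≤ d k ∧ d k < (L k : ℤ)) →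
        (0 ≤ (h' d).1 ∧ (h' d).1 < (∏ k ∈ D1, (L k + R k) : ℕ)) ∧
        (0 ≤ (h' d).2 ∧ (h' d).2 < (∏ k ∈ D2, (L k + R k) : ℕ))) ∧
      (∀ di dj : Fin D → ℤ,
        (∀ k, 0 ≤ di k ∧ di k < (L k : ℤ)) → (∀ k, 0 ≤ dj k ∧ dj k < (L k : ℤ)) →
        f' (h' di - h' dj) = f (di - dj)) := by
  classical
  open Stmt6Aux in
  -- bases
  set b : Fin D → ℤ := fun k => (L k : ℤ) + (R k : ℤ) with hb_def
  have hb : ∀ k, 1 ≤ b k := by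
    intro k; have := hR k; have := hRL k; simp only [hb_def]; omega
  set l1 : List (Fin D) := D1.toList with hl1
  set l2 : List (Fin D) := D2.toList with hl2
  set N1 : ℤ := (l1.map b).prod with hN1
  set N2 : ℤ := (l2.map b).prod with hN2
  have hb1 : ∀ k ∈ l1, 1 ≤ b k := fun k _ => hb k
  have hb2 : ∀ k ∈ l2, 1 ≤ b k := fun k _ => hb k
  have hN1cast : ((∏ k ∈ D1, (L k + R k) : ℕ) : ℤ) = N1 := by
    rw [hN1, Finset.prod_map_toList]
    push_cast
    rfl
  have hN2cast : ((∏ k ∈ D2, (L k + R k) : ℕ) : ℤ) = N2 := by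
    rw [hN2, Finset.prod_map_toList]
    push_cast
    rfl
  set enc1 : (Fin D → ℤ) → ℤ := fun d => encL b d l1 with henc1
  set enc2 : (Fin D → ℤ) → ℤ := fun d => encL b d l2 with henc2
  set T : Finset (Fin D → ℤ) :=
    Fintype.piFinset (fun k => Finset.Icc (-(R k : ℤ)) (R k : ℤ)) with hT
  refine ⟨fun r => ∑ x ∈ T, if (N1 ∣ enc1 x - r.1) ∧ (N2 ∣ enc2 x - r.2) then f x else 0,
    fun d => (enc1 d, enc2 d), ?_, ?_, ?_⟩
  · -- periodicity
    intro r m n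
    apply Finset.sum_congr rfl
    intro x _
    apply if_congr _ rfl rfl
    rw [hN1cast, hN2cast]
    constructor <;> rintro ⟨h1, h2⟩ <;> constructor
    · have : enc1 x - r.1 = (enc1 x - (r.1 + m * N1)) + m * N1 := by ring
      rw [this]; exact dvd_add h1 (Dvd.intro_left _ rfl)
    · have : enc2 x - r.2 = (enc2 x - (r.2 + n * N2)) + n * N2 := by ring
      rw [this]; exact dvd_add h2 (Dvd.intro_left _ rfl)
    · have : enc1 x - (r.1 + m * N1) = (enc1 x - r.1) - m * N1 := by ring
      rw [this]; exact dvd_sub h1 (Dvd.intro_left _ rfl)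
    · have : enc2 x - (r.2 + n * N2) = (enc2 x - r.2) - n * N2 := by ring
      rw [this]; exact dvd_sub h2 (Dvd.intro_left _ rfl)
  · -- range
    intro d hd
    have hrange : ∀ (l : List (Fin D)), 0 ≤ encL b d l ∧ encL b d l < (l.map b).prod := by
      intro l
      have h0 : 0 ≤ encL b d l := encL_nonneg b d l (fun k _ => hb k) (fun k _ => (hd k).1)
      have h1 : |encL b d l| ≤ (l.map b).prod - 1 := by
        apply encL_abs_le b d l (fun k _ => hb k)
        intro k _
        have := (hd k).1; have := (hd k).2
        rw [abs_of_nonneg (hd k).1]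
        have := hR k
        simp only [hb_def]
        omega
      constructor
      · exact h0
      · have := abs_le.mp h1
        omega
    constructor
    · rw [hN1cast]; exact hrange l1
    · rw [hN2cast]; exact hrange l2
  · -- main equation
    intro di dj hdi hdj
    set v : Fin D → ℤ := di - dj with hv
    have hsub : (enc1 di, enc2 di) - (enc1 dj, enc2 dj) = (enc1 di - enc1 dj, enc2 di - enc2 dj) := rfl
    rw [hsub]
    have hvbound : ∀ k, |v k| ≤ (L k : ℤ) - 1 := by
      intro k
      have h1 := (hdi k).1; have h2 := (hdi k).2
      have h3 := (hdj k).1; have h4 := (hdj k).2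
      simp only [hv, Pi.sub_apply]
      rw [abs_le]; omega
    have hcond : ∀ x ∈ T, (((N1 ∣ enc1 x - (enc1 di - enc1 dj)) ∧
        (N2 ∣ enc2 x - (enc2 di - enc2 dj))) ↔ x = v) := by
      intro x hx
      have hxb : ∀ k, |x k| ≤ (R k : ℤ) := by
        intro k
        have := Fintype.mem_piFinset.mp hx k
        rw [Finset.mem_Icc] at this
        rw [abs_le]; exact this
      constructor
      · rintro ⟨h1, h2⟩
        have key : ∀ (l : List (Fin D)), ((l.map b).prod ∣ encL b x l - (encL b di l - encL b dj l)) →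
            ∀ k ∈ l, x k = v k := by
          intro l hdvd
          have e1 : encL b x l - (encL b di l - encL b dj l)
              = encL b (fun k => x k - v k) l := by
            rw [encL_sub b di dj l]
            rw [encL_sub b x (fun k => di k - dj k) l]
            rfl
          rw [e1] at hdvd
          have hz := encL_eq_zero b (fun k => x k - v k) l (fun k _ => hb k)
            (fun k _ => by
              have h5 := hxb k; have h6 := hvbound k
              have h7 := hRL k
              have habs : |x k - v k| ≤ |x k| + |v k| := abs_sub _ _
              simp only [hb_def]
              omega) hdvd
          intro k hk
          have h9 : x k - v k = 0 := hz k hk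
          omega
        funext k
        have hk : k ∈ D1 ∪ D2 := by rw [hunion]; exact Finset.mem_univ k
        rcases Finset.mem_union.mp hk with h | h
        · exact key l1 h1 k (by rwa [hl1, Finset.mem_toList])
        · exact key l2 h2 k (by rwa [hl2, Finset.mem_toList])
      · rintro rfl
        constructor
        · have : enc1 v - (enc1 di - enc1 dj) = 0 := by
            simp only [henc1]
            rw [encL_sub b di dj l1]
            have : encL b v l1 = encL b (fun k => di k - dj k) l1 := rfl
            omega
          rw [this]; exact dvd_zero _
        · have : enc2 v - (enc2 di - enc2 dj) = 0 := by
            simp only [henc2]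
            rw [encL_sub b di dj l2]
            have : encL b v l2 = encL b (fun k => di k - dj k) l2 := rfl
            omega
          rw [this]; exact dvd_zero _
    calc (∑ x ∈ T, if (N1 ∣ enc1 x - (enc1 di - enc1 dj)) ∧
            (N2 ∣ enc2 x - (enc2 di - enc2 dj)) then f x else 0)
        = ∑ x ∈ T, if x = v then f x else 0 := by
          apply Finset.sum_congr rfl
          intro x hx
          exact if_congr (hcond x hx) rfl rfl
      _ = if v ∈ T then f v else 0 := Finset.sum_ite_eq' T v f
      _ = f (di - dj) := by
          by_cases hvT : v ∈ T
          · rw [if_pos hvT]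
          · rw [if_neg hvT]
            symm
            apply hloc
            by_contra hcon
            push_neg at hcon
            apply hvT
            rw [hT, Fintype.mem_piFinset]
            intro k
            rw [Finset.mem_Icc]
            have := hcon k
            have := abs_le.mp this
            exact ⟨this.1, this.2⟩
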